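/- (One-step error recursion for Algorithm 2) Let x⁻_{k+1} = x_k − (|f(x_k,t_k) − f(x_k,t_{k−1})|/‖∇_x f(x_k,t_k)‖²)·∇_x f(x_k,t_k) if ‖∇_x f(x_k,t_k)‖ ≥ ε and x⁻_{k+1} = x_k otherwise (with t_{k−1} = t_k − δ), followed by the update x_{k+1} = x⁻_{k+1} − α·∇_x f(x⁻_{k+1}, t_{k+1}) with 0 < α ≤ 1/(2M). Then f(x_{k+1},t_{k+1}) − f*(t_{k+1}) ≤ (1 − 2καm)·max(γ'δ², μδ) + (1 − 2καm)·(f(x_k,t_k) − f*(t_k)) + (1 − 2καm)·ψ, where κ = 1 − αM/2, γ' = K3 + 2K1/δ + K1²M/ε² + K2(K1 + (δ/2)K3)/ε + δ²K3²M/(4ε²), μ = K1 + (δ/2)K3, and ψ = δ(K1 + (δ/2)K3) + (K2²δ²/(2m))(Mδ/m + 2). -/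

import Mathlib

open RealInnerProductSpace

section Helpers
variable {E : Type*} [NormedAddCommGroup E] [InnerProductSpace ℝ E] [CompleteSpace E]

lemma line_hasDerivAt' (f : E → ℝ) (g : E → E)
    (hg : ∀ z : E, HasGradientAt f (g z) z) (x d : E) (s : ℝ) :
    HasDerivAt (fun s : ℝ => f (x + s • d)) ⟪g (x + s • d), d⟫ s := by
  have hline : HasDerivAt (fun s : ℝ => x + s • d) d s := by
    simpa using ((hasDerivAt_id s).smul_const d).const_add x
  have := ((hg (x + s • d)).hasFDerivAt).comp_hasDerivAt s hline
  simp at this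
  exact this

lemma lip_of_deriv_bound' {F : Type*} [NormedAddCommGroup F] [NormedSpace ℝ F]
    {f : ℝ → F} {f' : ℝ → F} {K a b : ℝ} (hab : a ≤ b)
    (hd : ∀ t ∈ Set.Icc a b, HasDerivAt f (f' t) t)
    (hK : ∀ t ∈ Set.Icc a b, ‖f' t‖ ≤ K) :
    ‖f b - f a‖ ≤ K * (b - a) := by
  have := (convex_Icc a b).norm_image_sub_le_of_norm_hasDerivWithin_le
    (fun t ht => (hd t ht).hasDerivWithinAt) hK
    (Set.left_mem_Icc.2 hab) (Set.right_mem_Icc.2 hab)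
  simpa [abs_of_nonneg (sub_nonneg.2 hab)] using this

lemma quad_upper' {f : E → ℝ} {g : E → E} {M : ℝ}
    (hg : ∀ z : E, HasGradientAt f (g z) z)
    (hL : ∀ x y : E, ‖g x - g y‖ ≤ M * ‖x - y‖) (x y : E) :
    f y ≤ f x + ⟪g x, y - x⟫ + M / 2 * ‖y - x‖ ^ 2 := by
  set d := y - x with hd
  set h : ℝ → ℝ := fun s => f (x + s • d) - s * ⟪g x, d⟫ - M / 2 * s ^ 2 * ‖d‖ ^ 2 with hh
  have hder : ∀ s : ℝ, HasDerivAt h (⟪g (x + s • d), d⟫ - ⟪g x, d⟫ - M * s * ‖d‖ ^ 2) s := by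
    intro s
    have h1 := line_hasDerivAt' f g hg x d s
    have h2 : HasDerivAt (fun s : ℝ => s * ⟪g x, d⟫) ⟪g x, d⟫ s := by
      simpa using (hasDerivAt_id s).mul_const (⟪g x, d⟫ : ℝ)
    have h3 : HasDerivAt (fun s : ℝ => M / 2 * s ^ 2 * ‖d‖ ^ 2) (M * s * ‖d‖ ^ 2) s := by
      have := (((hasDerivAt_pow 2 s).const_mul (M / 2)).mul_const (‖d‖ ^ 2))
      refine this.congr_deriv ?_
      push_cast; ring
    exact (h1.sub h2).sub h3
  have anti : AntitoneOn h (Set.Icc (0:ℝ) 1) := by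
    apply antitoneOn_of_deriv_nonpos (convex_Icc 0 1)
    · exact fun s _ => (hder s).continuousAt.continuousWithinAt
    · exact fun s hs => ((hder s).differentiableAt).differentiableWithinAt
    · intro s hs
      rw [interior_Icc] at hs
      rw [(hder s).deriv]
      have hgd : ⟪g (x + s • d) - g x, d⟫ ≤ M * s * ‖d‖ ^ 2 := by
        calc ⟪g (x + s • d) - g x, d⟫ ≤ ‖g (x + s • d) - g x‖ * ‖d‖ := real_inner_le_norm _ _
          _ ≤ (M * ‖(x + s • d) - x‖) * ‖d‖ :=
              mul_le_mul_of_nonneg_right (hL _ _) (norm_nonneg d)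
          _ = M * s * ‖d‖ ^ 2 := by
              rw [add_sub_cancel_left, norm_smul, Real.norm_eq_abs, abs_of_pos hs.1]; ring
      have hsub : ⟪g (x + s • d), d⟫ - ⟪g x, d⟫ = ⟪g (x + s • d) - g x, d⟫ :=
        (inner_sub_left _ _ _).symm
      linarith [hsub ▸ hgd]
  have h10 := anti (Set.left_mem_Icc.2 zero_le_one) (Set.right_mem_Icc.2 zero_le_one) zero_le_one
  have e0 : h 0 = f x := by simp [hh]
  have e1 : h 1 = f y - ⟪g x, d⟫ - M / 2 * ‖d‖ ^ 2 := by
    simp [hh, hd]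
  rw [e0, e1] at h10
  linarith

lemma quad_lower' {f : E → ℝ} {g : E → E} {m : ℝ}
    (hg : ∀ z : E, HasGradientAt f (g z) z)
    (hsc : ∀ x y : E, m * ‖x - y‖ ^ 2 ≤ ⟪g x - g y, x - y⟫) (x y : E) :
    f x + ⟪g x, y - x⟫ + m / 2 * ‖y - x‖ ^ 2 ≤ f y := by
  set d := y - x with hd
  set h : ℝ → ℝ := fun s => f (x + s • d) - s * ⟪g x, d⟫ - m / 2 * s ^ 2 * ‖d‖ ^ 2 with hh
  have hder : ∀ s : ℝ, HasDerivAt h (⟪g (x + s • d), d⟫ - ⟪g x, d⟫ - m * s * ‖d‖ ^ 2) s := by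
    intro s
    have h1 := line_hasDerivAt' f g hg x d s
    have h2 : HasDerivAt (fun s : ℝ => s * ⟪g x, d⟫) ⟪g x, d⟫ s := by
      simpa using (hasDerivAt_id s).mul_const (⟪g x, d⟫ : ℝ)
    have h3 : HasDerivAt (fun s : ℝ => m / 2 * s ^ 2 * ‖d‖ ^ 2) (m * s * ‖d‖ ^ 2) s := by
      have := (((hasDerivAt_pow 2 s).const_mul (m / 2)).mul_const (‖d‖ ^ 2))
      refine this.congr_deriv ?_
      push_cast; ring
    exact (h1.sub h2).sub h3
  have mono : MonotoneOn h (Set.Icc (0:ℝ) 1) := by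
    apply monotoneOn_of_deriv_nonneg (convex_Icc 0 1)
    · exact fun s _ => (hder s).continuousAt.continuousWithinAt
    · exact fun s hs => ((hder s).differentiableAt).differentiableWithinAt
    · intro s hs
      rw [interior_Icc] at hs
      rw [(hder s).deriv]
      have hkey := hsc (x + s • d) x
      have heq : x + s • d - x = s • d := add_sub_cancel_left x _
      rw [heq] at hkey
      have h1 : m * (s ^ 2 * ‖d‖ ^ 2) ≤ s * ⟪g (x + s • d) - g x, d⟫ := by
        rwa [norm_smul, Real.norm_eq_abs, abs_of_pos hs.1, mul_pow,
          real_inner_smul_right] at hkey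
      have h2 : m * s * ‖d‖ ^ 2 ≤ ⟪g (x + s • d) - g x, d⟫ := by
        have hs0 := hs.1
        nlinarith [h1]
      have hsub : ⟪g (x + s • d), d⟫ - ⟪g x, d⟫ = ⟪g (x + s • d) - g x, d⟫ :=
        (inner_sub_left _ _ _).symm
      linarith [hsub ▸ h2]
  have h10 := mono (Set.left_mem_Icc.2 zero_le_one) (Set.right_mem_Icc.2 zero_le_one) zero_le_one
  have e0 : h 0 = f x := by simp [hh]
  have e1 : h 1 = f y - ⟪g x, d⟫ - m / 2 * ‖d‖ ^ 2 := by
    simp [hh, hd]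
  rw [e0, e1] at h10
  linarith

end Helpers

set_option maxHeartbeats 1600000 in
/-- one-step error recursion for Algorithm 2: with the
prediction step of Algorithm 2 (using the backward-difference estimate of
`∇_t f`) followed by the gradient update with `0 < α ≤ 1/(2M)`,
`f(x_{k+1},t_{k+1}) − f*(t_{k+1}) ≤ (1−2καm)·max(γ'δ², μδ)
  + (1−2καm)(f(x_k,t_k) − f*(t_k)) + (1−2καm)·ψ`. -/
theorem alg2_one_step_recursion
    {E : Type*} [NormedAddCommGroup E] [InnerProductSpace ℝ E] [CompleteSpace E]
    (f : E → ℝ → ℝ) (gx : E → ℝ → E) (ft : E → ℝ → ℝ)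
    (fxt : E → ℝ → E) (ftt : E → ℝ → ℝ) (xstar : ℝ → E)
    (m M K1 K2 K3 : ℝ) (hm : 0 < m) (hmM : m ≤ M)
    (hgrad : ∀ (x : E) (t : ℝ), 0 ≤ t → HasGradientAt (fun y => f y t) (gx x t) x)
    (hft : ∀ (x : E) (t : ℝ), 0 ≤ t → HasDerivAt (fun s => f x s) (ft x t) t)
    (hfxt : ∀ (x : E) (t : ℝ), 0 ≤ t → HasDerivAt (fun s => gx x s) (fxt x t) t)
    (hftt : ∀ (x : E) (t : ℝ), 0 ≤ t → HasDerivAt (fun s => ft x s) (ftt x t) t)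
    (hsc : ∀ (t : ℝ), 0 ≤ t → ∀ x y : E, m * ‖x - y‖ ^ 2 ≤ ⟪gx x t - gx y t, x - y⟫)
    (hLip : ∀ (t : ℝ), 0 ≤ t → ∀ x y : E, ‖gx x t - gx y t‖ ≤ M * ‖x - y‖)
    (hK1 : ∀ (x : E) (t : ℝ), 0 ≤ t → |ft x t| ≤ K1)
    (hK2 : ∀ (x : E) (t : ℝ), 0 ≤ t → ‖fxt x t‖ ≤ K2)
    (hK3 : ∀ (x : E) (t : ℝ), 0 ≤ t → |ftt x t| ≤ K3)
    (hmin : ∀ (t : ℝ), 0 ≤ t → IsMinOn (fun y => f y t) Set.univ (xstar t))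
    (xk : E) (tk δ ε α : ℝ) (hδ : 0 < δ) (hδtk : δ ≤ tk) (hε : 0 < ε)
    (hα : 0 < α) (hαM : α ≤ 1 / (2 * M))
    (xminus xnext : E)
    (hxminus : xminus =
      if ε ≤ ‖gx xk tk‖ then
        xk - (|f xk tk - f xk (tk - δ)| / ‖gx xk tk‖ ^ 2) • gx xk tk
      else xk)
    (hxnext : xnext = xminus - α • gx xminus (tk + δ))
    (κ γ' μ ψ : ℝ)
    (hκ : κ = 1 - α * M / 2)
    (hγ' : γ' = K3 + 2 * K1 / δ + K1 ^ 2 * M / ε ^ 2 + K2 * (K1 + δ / 2 * K3) / ε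
        + δ ^ 2 * K3 ^ 2 * M / (4 * ε ^ 2))
    (hμ : μ = K1 + δ / 2 * K3)
    (hψ : ψ = δ * (K1 + δ / 2 * K3) + K2 ^ 2 * δ ^ 2 / (2 * m) * (M * δ / m + 2)) :
    f xnext (tk + δ) - f (xstar (tk + δ)) (tk + δ) ≤
      (1 - 2 * κ * α * m) * max (γ' * δ ^ 2) (μ * δ)
        + (1 - 2 * κ * α * m) * (f xk tk - f (xstar tk) tk)
        + (1 - 2 * κ * α * m) * ψ := by
  have hM : 0 < M := lt_of_lt_of_le hm hmM
  have htk : (0:ℝ) ≤ tk := le_trans hδ.le hδtk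
  have ht' : (0:ℝ) ≤ tk + δ := by linarith
  have htkδ : (0:ℝ) ≤ tk - δ := by linarith
  have hK1n : 0 ≤ K1 := le_trans (abs_nonneg _) (hK1 xk tk htk)
  have hK2n : 0 ≤ K2 := le_trans (norm_nonneg _) (hK2 xk tk htk)
  have hK3n : 0 ≤ K3 := le_trans (abs_nonneg _) (hK3 xk tk htk)
  have hαM' : α * M ≤ 1 / 2 := by
    rw [le_div_iff₀ (by positivity : (0:ℝ) < 2 * M)] at hαM
    nlinarith [hαM]
  have hκ1 : κ ≤ 1 := by
    rw [hκ]; nlinarith [mul_pos hα hM]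
  have hκ34 : 3/4 ≤ κ := by rw [hκ]; linarith
  have hc0 : 0 ≤ 1 - 2 * κ * α * m := by
    have hαm : 0 ≤ α * m := mul_nonneg hα.le hm.le
    have h1 : α * m ≤ α * M := mul_le_mul_of_nonneg_left hmM hα.le
    nlinarith [mul_nonneg (by linarith : (0:ℝ) ≤ 1 - κ) hαm]
  -- gradient data at time tk + δ
  have hg' : ∀ z : E, HasGradientAt (fun y => f y (tk + δ)) (gx z (tk + δ)) z :=
    fun z => hgrad z _ ht'
  -- PL inequality
  have hPL : ∀ (t : ℝ), 0 ≤ t → ∀ x : E,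
      2 * m * (f x t - f (xstar t) t) ≤ ‖gx x t‖ ^ 2 := by
    clear hγ' hμ hψ hκ hκ1 hκ34 hc0 hαM' hαM hxminus hxnext hg'
    intro t ht x
    have hql := quad_lower' (fun z => hgrad z t ht) (hsc t ht) x (xstar t)
    have h0 : (0:ℝ) ≤ ‖gx x t + m • (xstar t - x)‖ ^ 2 := sq_nonneg _
    have hexp : ‖gx x t + m • (xstar t - x)‖ ^ 2
        = ‖gx x t‖ ^ 2 + 2 * (m * ⟪gx x t, xstar t - x⟫) + m ^ 2 * ‖xstar t - x‖ ^ 2 := by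
      rw [norm_add_sq_real, real_inner_smul_right, norm_smul, Real.norm_eq_abs,
        abs_of_pos hm, mul_pow]
    rw [hexp] at h0
    have h2 := mul_le_mul_of_nonneg_left hql (by positivity : (0:ℝ) ≤ 2 * m)
    nlinarith [h2, h0]
  -- descent step
  have hdes : f xnext (tk + δ) ≤ f xminus (tk + δ) - α * κ * ‖gx xminus (tk + δ)‖ ^ 2 := by
    have hq := quad_upper' hg' (hLip (tk + δ) ht') xminus xnext
    have hdiff : xnext - xminus = -(α • gx xminus (tk + δ)) := by
      rw [hxnext]; abel
    clear hγ' hμ hψ hxminus hαM hmin hsc hLip hgrad hft hfxt hftt hK1 hK2 hK3 hPL hg'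
    rw [hdiff] at hq
    have hip : ⟪gx xminus (tk + δ), -(α • gx xminus (tk + δ))⟫
        = -(α * ‖gx xminus (tk + δ)‖ ^ 2) := by
      rw [inner_neg_right, real_inner_smul_right, real_inner_self_eq_norm_sq]
    have hnr : ‖-(α • gx xminus (tk + δ))‖ ^ 2 = α ^ 2 * ‖gx xminus (tk + δ)‖ ^ 2 := by
      rw [norm_neg, norm_smul, Real.norm_eq_abs, abs_of_pos hα, mul_pow]
    rw [hip, hnr] at hq
    rw [hκ]
    clear hκ hκ1 hκ34 hc0 hxnext
    nlinarith [hq]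
  have hstep1 : f xnext (tk + δ) - f (xstar (tk + δ)) (tk + δ)
      ≤ (1 - 2 * κ * α * m) * (f xminus (tk + δ) - f (xstar (tk + δ)) (tk + δ)) := by
    have hpl := hPL (tk + δ) ht' xminus
    have hκα : (0:ℝ) ≤ α * κ := mul_nonneg hα.le (by linarith)
    have h2 := mul_le_mul_of_nonneg_left hpl hκα
    clear hγ' hμ hψ hκ hxminus hxnext hαM hαM' hmin hsc hLip hgrad hft hfxt hftt hK1 hK2 hK3 hPL hg' hpl
    nlinarith [hdes, h2]
  -- time-Lipschitz bounds
  have hA1 : ∀ x : E, |f x (tk + δ) - f x tk| ≤ K1 * δ := by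
    intro x
    have := lip_of_deriv_bound' (f := fun s => f x s) (f' := fun s => ft x s)
      (K := K1) (a := tk) (b := tk + δ) (by linarith)
      (fun t ht => hft x t (le_trans htk ht.1))
      (fun t ht => hK1 x t (le_trans htk ht.1))
    simpa using this
  have hA0 : |f xk tk - f xk (tk - δ)| ≤ K1 * δ := by
    have := lip_of_deriv_bound' (f := fun s => f xk s) (f' := fun s => ft xk s)
      (K := K1) (a := tk - δ) (b := tk) (by linarith)
      (fun t ht => hft xk t (le_trans htkδ ht.1))
      (fun t ht => hK1 xk t (le_trans htkδ ht.1))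
    simpa using this
  have hA3 : ‖gx xk (tk + δ) - gx xk tk‖ ≤ K2 * δ := by
    have := lip_of_deriv_bound' (f := fun s => gx xk s) (f' := fun s => fxt xk s)
      (K := K2) (a := tk) (b := tk + δ) (by linarith)
      (fun t ht => hfxt xk t (le_trans htk ht.1))
      (fun t ht => hK2 xk t (le_trans htk ht.1))
    simpa using this
  have hA2 : f (xstar tk) tk - f (xstar (tk + δ)) (tk + δ) ≤ K1 * δ := by
    have h1 : f (xstar tk) tk ≤ f (xstar (tk + δ)) tk :=
      isMinOn_iff.mp (hmin tk htk) (xstar (tk + δ)) (Set.mem_univ _)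
    have h2 := abs_le.mp (hA1 (xstar (tk + δ)))
    linarith [h2.1]
  have hψ0 : 0 ≤ ψ := by
    rw [hψ]
    have h1 : 0 ≤ δ * (K1 + δ / 2 * K3) := by positivity
    have h2 : 0 ≤ K2 ^ 2 * δ ^ 2 / (2 * m) := by positivity
    have h3 : 0 ≤ M * δ / m + 2 := by positivity
    nlinarith
  -- prediction-step bound
  have hstep2 : f xminus (tk + δ) - f (xstar (tk + δ)) (tk + δ)
      ≤ max (γ' * δ ^ 2) (μ * δ) + (f xk tk - f (xstar tk) tk) + ψ := by
    have hA1k := abs_le.mp (hA1 xk)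
    rcases le_or_gt ε ‖gx xk tk‖ with hcase | hcase
    · -- prediction step is performed
      have hxm : xminus = xk - (|f xk tk - f xk (tk - δ)| / ‖gx xk tk‖ ^ 2) • gx xk tk := by
        rw [hxminus, if_pos hcase]
      set g : E := gx xk tk with hgdef
      set Δ : ℝ := |f xk tk - f xk (tk - δ)| with hΔdef
      have hgpos : (0:ℝ) < ‖g‖ := lt_of_lt_of_le hε hcase
      have hgne : ‖g‖ ≠ 0 := ne_of_gt hgpos
      have hΔ0 : 0 ≤ Δ := abs_nonneg _
      have hdd : xminus - xk = -((Δ / ‖g‖ ^ 2) • g) := by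
        rw [hxm]; abel
      have hdnorm : ‖xminus - xk‖ = Δ / ‖g‖ := by
        rw [hdd, norm_neg, norm_smul, Real.norm_eq_abs,
          abs_of_nonneg (div_nonneg hΔ0 (sq_nonneg _))]
        rw [pow_two]
        field_simp
      have hdle : ‖xminus - xk‖ ≤ K1 * δ / ε := by
        rw [hdnorm]
        exact div_le_div₀ (mul_nonneg hK1n hδ.le) hA0 hε hcase
      have hip : ⟪g, xminus - xk⟫ ≤ 0 := by
        rw [hdd, inner_neg_right, real_inner_smul_right, real_inner_self_eq_norm_sq]
        have := mul_nonneg (div_nonneg hΔ0 (sq_nonneg ‖g‖)) (sq_nonneg ‖g‖)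
        linarith
      have hcross : ⟪gx xk (tk + δ) - g, xminus - xk⟫ ≤ K2 * δ * (K1 * δ / ε) := by
        calc ⟪gx xk (tk + δ) - g, xminus - xk⟫
            ≤ ‖gx xk (tk + δ) - g‖ * ‖xminus - xk‖ := real_inner_le_norm _ _
          _ ≤ (K2 * δ) * (K1 * δ / ε) :=
              mul_le_mul hA3 hdle (norm_nonneg _) (mul_nonneg hK2n hδ.le)
      have hq := quad_upper' hg' (hLip (tk + δ) ht') xk xminus
      have hsplit : ⟪gx xk (tk + δ) - g, xminus - xk⟫
          = ⟪gx xk (tk + δ), xminus - xk⟫ - ⟪g, xminus - xk⟫ :=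
        inner_sub_left _ _ _
      have hMd : M / 2 * ‖xminus - xk‖ ^ 2 ≤ M / 2 * (K1 * δ / ε) ^ 2 := by
        apply mul_le_mul_of_nonneg_left _ (by linarith : (0:ℝ) ≤ M / 2)
        exact pow_le_pow_left₀ (norm_nonneg _) hdle 2
      have hBminus : f xminus (tk + δ) ≤ f xk (tk + δ) + K2 * δ * (K1 * δ / ε)
          + M / 2 * (K1 * δ / ε) ^ 2 := by
        linarith [hq, hip, hcross, hMd, hsplit]
      have hexpand : γ' * δ ^ 2 = 2 * K1 * δ + K2 * δ * (K1 * δ / ε)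
          + M * (K1 * δ / ε) ^ 2
          + (K3 * δ ^ 2 + K2 * δ / 2 * K3 * δ ^ 2 / ε
            + δ ^ 4 * K3 ^ 2 * M / (4 * ε ^ 2) * δ ^ 2 / δ ^ 2) := by
        rw [hγ']
        field_simp
        ring
      have nn1 : 0 ≤ K3 * δ ^ 2 := mul_nonneg hK3n (sq_nonneg δ)
      have nn2 : 0 ≤ K2 * δ / 2 * K3 * δ ^ 2 / ε := by
        apply div_nonneg _ hε.le
        exact mul_nonneg (mul_nonneg (by positivity) hK3n) (sq_nonneg δ)
      have nn3 : 0 ≤ δ ^ 4 * K3 ^ 2 * M / (4 * ε ^ 2) * δ ^ 2 / δ ^ 2 := by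
        apply div_nonneg _ (sq_nonneg δ)
        apply mul_nonneg _ (sq_nonneg δ)
        apply div_nonneg _ (by positivity)
        exact mul_nonneg (mul_nonneg (by positivity) (sq_nonneg K3)) hM.le
      have nn4 : 0 ≤ M / 2 * (K1 * δ / ε) ^ 2 :=
        mul_nonneg (by linarith) (sq_nonneg _)
      have hkey : 2 * K1 * δ + K2 * δ * (K1 * δ / ε) + M / 2 * (K1 * δ / ε) ^ 2
          ≤ γ' * δ ^ 2 := by
        rw [hexpand]
        linarith [nn1, nn2, nn3, nn4]
      have hmaxl : γ' * δ ^ 2 ≤ max (γ' * δ ^ 2) (μ * δ) := le_max_left _ _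
      linarith [hBminus, hA1k.2, hA2, hkey, hmaxl, hψ0]
    · -- no prediction: xminus = xk
      have hxm : xminus = xk := by
        rw [hxminus, if_neg (not_le.mpr hcase)]
      have hK3δ : 0 ≤ δ / 2 * K3 * δ := by
        apply mul_nonneg _ hδ.le
        exact mul_nonneg (by positivity) hK3n
      have hμδ : K1 * δ ≤ μ * δ := by
        rw [hμ]; linarith [hK3δ]
      have hψ1 : K1 * δ ≤ ψ := by
        rw [hψ]
        have h2 : 0 ≤ K2 ^ 2 * δ ^ 2 / (2 * m) := by positivity
        have h3 : 0 ≤ M * δ / m + 2 := by positivity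
        linarith [hK3δ, mul_nonneg h2 h3]
      have hmaxr : μ * δ ≤ max (γ' * δ ^ 2) (μ * δ) := le_max_right _ _
      rw [hxm]
      linarith [hA1k.2, hA2, hμδ, hψ1, hmaxr]
  have hfinal := mul_le_mul_of_nonneg_left hstep2 hc0
  have hring : (1 - 2 * κ * α * m) * (max (γ' * δ ^ 2) (μ * δ)
      + (f xk tk - f (xstar tk) tk) + ψ)
      = (1 - 2 * κ * α * m) * max (γ' * δ ^ 2) (μ * δ)
        + (1 - 2 * κ * α * m) * (f xk tk - f (xstar tk) tk)
        + (1 - 2 * κ * α * m) * ψ := by ring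
  linarith [hstep1, hfinal, hring.le, hring.ge]
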